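/- Let {γ_n}_{n≥0} be a sequence of real numbers with inf_{n} γ_n > −∞. The following are equivalent: (i) {γ_n} is CPD, sup_n (γ_{n+1} − γ_n) < ∞, and the measure ν in the representing triplet of γ satisfies supp ν ⊆ [0,∞); (ii) there exist a finite Borel measure ν on ℝ and d ∈ ℝ such that ν(ℝ∖[0,1)) = 0, the function x ↦ 1/(1−x) is ν-integrable, and γ_n = γ_0 + n·d − ∫_{[0,1)} (1−xⁿ)/(1−x)² dν(x) for all n ∈ ℤ₊. Moreover: if (i) holds and (b, c, ν) represents γ, then c = 0, x ↦ 1/(1−x) is ν-integrable, and the pair (d, ν) with d = b + ∫_{[0,1)} 1/(1−x) dν(x) is the unique pair satisfying (ii); if (ii) holds, then d ≥ 0, the sequence (Δγ)_n = γ_{n+1} − γ_n is monotonically increasing with limit d, and (b, 0, ν) with b = d − ∫_{[0,1)} 1/(1−x) dν(x) is the representing triplet of γ. -/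

import Mathlib

open MeasureTheory Filter Topology
open scoped ComplexOrder

noncomputable section

/-- A real sequence `γ` is *conditionally positive definite* (CPD) if
`∑_{i,j=0}^k γ_{i+j} λ_i conj(λ_j) ≥ 0` for all finite sequences `λ_0, …, λ_k` of complex
numbers with `∑_{i=0}^k λ_i = 0`. -/
def IsCPDSeq (γ : ℕ → ℝ) : Prop :=
  ∀ (k : ℕ) (l : ℕ → ℂ), ∑ i ∈ Finset.range (k + 1), l i = 0 →
    0 ≤ ∑ i ∈ Finset.range (k + 1), ∑ j ∈ Finset.range (k + 1),
        (γ (i + j) : ℂ) * l i * (starRingEnd ℂ) (l j)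

/-- A real sequence `γ` is *positive definite* (PD) if
`∑_{i,j=0}^k γ_{i+j} λ_i conj(λ_j) ≥ 0` for all finite sequences `λ_0, …, λ_k ∈ ℂ`. -/
def IsPDSeq (γ : ℕ → ℝ) : Prop :=
  ∀ (k : ℕ) (l : ℕ → ℂ),
    0 ≤ ∑ i ∈ Finset.range (k + 1), ∑ j ∈ Finset.range (k + 1),
        (γ (i + j) : ℂ) * l i * (starRingEnd ℂ) (l j)

/-- The polynomial `Q_n`: `Q_n(x) = 0` for `n = 0, 1` and
`Q_n(x) = ∑_{j=0}^{n-2} (n - j - 1) x^j` for `n ≥ 2`. -/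
def Qpoly (n : ℕ) (x : ℝ) : ℝ :=
  ∑ j ∈ Finset.range (n - 1), ((n : ℝ) - (j : ℝ) - 1) * x ^ j

/-- `(b, c, ν)` is a representing triplet of the sequence `γ`: `b ∈ ℝ`, `c ≥ 0`, `ν` a finite
compactly supported Borel measure on `ℝ` with `ν({1}) = 0`, and
`γ_n = γ_0 + b n + c n² + ∫ Q_n dν` for all `n`. -/
def IsRepTriplet (γ : ℕ → ℝ) (b c : ℝ) (ν : Measure ℝ) : Prop :=
  0 ≤ c ∧ IsFiniteMeasure ν ∧ (∃ K : Set ℝ, IsCompact K ∧ ν Kᶜ = 0) ∧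
    ν ({1} : Set ℝ) = 0 ∧
    ∀ n : ℕ, γ n = γ 0 + b * n + c * (n : ℝ) ^ 2 + ∫ x, Qpoly n x ∂ν

/-- The sequence `n ↦ |γ_n|^{1/n}`. -/
def rootSeq (γ : ℕ → ℝ) : ℕ → ℝ := fun n => |γ n| ^ ((1 : ℝ) / n)

/-- `limsup_{n → ∞} |γ_n|^{1/n} < ∞`, i.e. the sequence `|γ_n|^{1/n}` is (eventually)
bounded above. -/
def FiniteExpGrowth (γ : ℕ → ℝ) : Prop :=
  IsBoundedUnder (· ≤ ·) atTop (rootSeq γ)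

/-- `limsup_{n → ∞} |γ_n|^{1/n}` (as a real number). -/
def limsupRoot (γ : ℕ → ℝ) : ℝ := limsup (rootSeq γ) atTop

/-- The closed support of a Borel measure on `ℝ`: the set of points all of whose open
neighbourhoods have nonzero measure. -/
def measSupport (ν : Measure ℝ) : Set ℝ :=
  {x : ℝ | ∀ U : Set ℝ, IsOpen U → x ∈ U → ν U ≠ 0}

/-- The difference transformation `Δ`, `(Δγ)_n = γ_{n+1} - γ_n`. -/
def deltaSeq (γ : ℕ → ℝ) : ℕ → ℝ := fun n => γ (n + 1) - γ n

/-- The pair `(ν, d)` satisfies condition (ii) of Theorem `boundiff-scalar2` for `γ`: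
`ν` is a finite Borel measure with `ν(ℝ \ [0,1)) = 0`, `1/(1-x) ∈ L¹(ν)` and
`γ_n = γ_0 + n d - ∫_{[0,1)} (1-xⁿ)/(1-x)² dν` for all `n`. -/
def GoodPairIco (γ : ℕ → ℝ) (ν : Measure ℝ) (d : ℝ) : Prop :=
  IsFiniteMeasure ν ∧ ν ((Set.Ico (0 : ℝ) 1)ᶜ) = 0 ∧
    Integrable (fun x : ℝ => (1 - x)⁻¹) ν ∧
    ∀ n : ℕ, γ n = γ 0 + n * d - ∫ x in Set.Ico (0 : ℝ) 1, (1 - x ^ n) / (1 - x) ^ 2 ∂ν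

section AuxLemmas
open scoped NNReal ENNReal



lemma Qpoly_succ (n : ℕ) (x : ℝ) :
    Qpoly (n + 1) x = Qpoly n x + ∑ j ∈ Finset.range n, x ^ j := by
  rcases n with _ | m
  · simp [Qpoly]
  · have h1 : Qpoly (m + 1) x = ∑ j ∈ Finset.range (m + 1), ((m + 1 : ℝ) - j - 1) * x ^ j := by
      rw [Qpoly, Finset.sum_range_succ]
      simp
    rw [h1, Qpoly]
    simp only [Nat.add_sub_cancel]
    rw [← Finset.sum_add_distrib]
    refine Finset.sum_congr rfl fun j hj => ?_
    push_cast
    ring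

lemma geom_sum_eq' (n : ℕ) {x : ℝ} (hx : x ≠ 1) :
    ∑ j ∈ Finset.range n, x ^ j = (1 - x ^ n) / (1 - x) := by
  have h1 : (1 : ℝ) - x ≠ 0 := sub_ne_zero.2 (by simpa [eq_comm] using hx)
  rw [eq_div_iff h1]
  linear_combination (-1 : ℝ) * geom_sum_mul x n

lemma Qpoly_mul (n : ℕ) (x : ℝ) :
    Qpoly n x * (1 - x) ^ 2 = n * (1 - x) - (1 - x ^ n) := by
  induction n with
  | zero => simp [Qpoly]
  | succ n ih =>
    rw [Qpoly_succ]
    have hg := geom_sum_mul x n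
    push_cast
    linear_combination ih - (1 - x) * hg

lemma Qpoly_eq (n : ℕ) {x : ℝ} (hx : x ≠ 1) :
    Qpoly n x = n * (1 - x)⁻¹ - (1 - x ^ n) / (1 - x) ^ 2 := by
  have h1 : (1 : ℝ) - x ≠ 0 := sub_ne_zero.2 (by simpa [eq_comm] using hx)
  have h2 : ((1 : ℝ) - x) ^ 2 ≠ 0 := pow_ne_zero _ h1
  field_simp
  linear_combination Qpoly_mul n x


lemma integrable_of_concentrated {ν : Measure ℝ} [IsFiniteMeasure ν] {K : Set ℝ}
    (hK : IsCompact K) (hν : ν Kᶜ = 0) {f : ℝ → ℝ} (hf : Continuous f) :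
    Integrable f ν := by
  obtain ⟨C, hC⟩ := hK.exists_bound_of_continuousOn hf.continuousOn
  refine Integrable.mono' (integrable_const C) hf.aestronglyMeasurable ?_
  have hae : ∀ᵐ x ∂ν, x ∈ K := by
    rw [ae_iff]
    simpa [Set.compl_def] using hν
  filter_upwards [hae] with x hx using hC x hx

lemma measure_null_of_disjoint_measSupport {ν : Measure ℝ} {U : Set ℝ} (hU : IsOpen U)
    (h : ∀ x ∈ U, x ∉ measSupport ν) : ν U = 0 := by
  obtain ⟨B, hBc, -, hBbasis⟩ := TopologicalSpace.exists_countable_basis ℝ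
  set C := {V ∈ B | ν V = 0} with hCdef
  have hC : ν (⋃₀ C) = 0 := by
    rw [measure_sUnion_null_iff (hBc.mono (Set.sep_subset _ _))]
    exact fun s hs => hs.2
  refine measure_mono_null (fun x hx => ?_) hC
  have hx2 := h x hx
  simp only [measSupport, Set.mem_setOf_eq, not_forall] at hx2
  obtain ⟨W, hWopen, hxW, hW0⟩ := hx2
  have hW0' : ν W = 0 := by simpa using hW0
  obtain ⟨V, hVB, hxV, hVW⟩ := hBbasis.exists_subset_of_mem_open hxW hWopen
  exact ⟨V, ⟨hVB, measure_mono_null hVW hW0'⟩, hxV⟩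

lemma ae_mem_Ico {ν : Measure ℝ} (hnull : ν (Set.Ico (0:ℝ) 1)ᶜ = 0) :
    ∀ᵐ x ∂ν, x ∈ Set.Ico (0:ℝ) 1 := by
  rw [ae_iff]; simpa [Set.compl_def] using hnull

lemma restrict_Ico_eq {ν : Measure ℝ} (hnull : ν (Set.Ico (0:ℝ) 1)ᶜ = 0) :
    ν.restrict (Set.Ico (0:ℝ) 1) = ν :=
  Measure.restrict_eq_self_of_ae_mem (ae_mem_Ico hnull)

lemma meas_gn (n : ℕ) : Measurable (fun x : ℝ => (1 - x ^ n) / (1 - x) ^ 2) := by fun_prop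

lemma meas_tn (n : ℕ) : Measurable (fun x : ℝ => x ^ n * (1 - x)⁻¹) := by fun_prop

lemma gn_bound {x : ℝ} (hx : x ∈ Set.Ico (0:ℝ) 1) (n : ℕ) :
    ‖(1 - x ^ n) / (1 - x) ^ 2‖ ≤ (n : ℝ) * (1 - x)⁻¹ := by
  obtain ⟨hx0, hx1⟩ := hx
  have h1x : (0:ℝ) < 1 - x := by linarith
  have hne : x ≠ 1 := ne_of_lt hx1
  have hxn : x ^ n ≤ 1 := pow_le_one₀ hx0 hx1.le
  have hnn : (0:ℝ) ≤ (1 - x ^ n) / (1 - x) ^ 2 :=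
    div_nonneg (by linarith) (sq_nonneg _)
  rw [Real.norm_eq_abs, abs_of_nonneg hnn]
  have hsplit : (1 - x ^ n) / (1 - x) ^ 2 = (1 - x ^ n) / (1 - x) * (1 - x)⁻¹ := by
    rw [sq, div_mul_eq_div_div, div_eq_mul_inv]
  rw [hsplit, ← geom_sum_eq' n hne]
  have hsum : ∑ j ∈ Finset.range n, x ^ j ≤ (n : ℝ) := by
    calc ∑ j ∈ Finset.range n, x ^ j ≤ ∑ j ∈ Finset.range n, 1 :=
          Finset.sum_le_sum fun j _ => pow_le_one₀ hx0 hx1.le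
      _ = (n : ℝ) := by simp
  exact mul_le_mul_of_nonneg_right hsum (inv_nonneg.2 h1x.le)

lemma tn_bound {x : ℝ} (hx : x ∈ Set.Ico (0:ℝ) 1) (n : ℕ) :
    ‖x ^ n * (1 - x)⁻¹‖ ≤ (1 - x)⁻¹ := by
  obtain ⟨hx0, hx1⟩ := hx
  have h1x : (0:ℝ) < 1 - x := by linarith
  have hxn : x ^ n ≤ 1 := pow_le_one₀ hx0 hx1.le
  rw [Real.norm_eq_abs, abs_of_nonneg (mul_nonneg (pow_nonneg hx0 n) (inv_nonneg.2 h1x.le))]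
  nlinarith [inv_nonneg.2 h1x.le]

lemma integrable_gn {ν : Measure ℝ} (hnull : ν (Set.Ico (0:ℝ) 1)ᶜ = 0)
    (hint : Integrable (fun x : ℝ => (1 - x)⁻¹) ν) (n : ℕ) :
    Integrable (fun x : ℝ => (1 - x ^ n) / (1 - x) ^ 2) ν := by
  refine Integrable.mono' (hint.const_mul (n : ℝ)) (meas_gn n).aestronglyMeasurable ?_
  filter_upwards [ae_mem_Ico hnull] with x hx using gn_bound hx n

lemma integrable_tn {ν : Measure ℝ} (hnull : ν (Set.Ico (0:ℝ) 1)ᶜ = 0)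
    (hint : Integrable (fun x : ℝ => (1 - x)⁻¹) ν) (n : ℕ) :
    Integrable (fun x : ℝ => x ^ n * (1 - x)⁻¹) ν := by
  refine Integrable.mono' hint (meas_tn n).aestronglyMeasurable ?_
  filter_upwards [ae_mem_Ico hnull] with x hx using tn_bound hx n



lemma GoodPairIco.rep' {γ : ℕ → ℝ} {ν : Measure ℝ} {d : ℝ} (h : GoodPairIco γ ν d) :
    ∀ n : ℕ, γ n = γ 0 + n * d - ∫ x, (1 - x ^ n) / (1 - x) ^ 2 ∂ν := by
  intro n
  rw [← restrict_Ico_eq h.2.1]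
  exact h.2.2.2 n

lemma GoodPairIco.delta_eq {γ : ℕ → ℝ} {ν : Measure ℝ} {d : ℝ} (h : GoodPairIco γ ν d) (n : ℕ) :
    deltaSeq γ n = d - ∫ x, x ^ n * (1 - x)⁻¹ ∂ν := by
  have hnull := h.2.1
  have hint := h.2.2.1
  have h1 := h.rep' (n + 1)
  have h2 := h.rep' n
  have hsub : (∫ x, (1 - x ^ (n+1)) / (1 - x) ^ 2 ∂ν) - ∫ x, (1 - x ^ n) / (1 - x) ^ 2 ∂ν
      = ∫ x, x ^ n * (1 - x)⁻¹ ∂ν := by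
    rw [← integral_sub (integrable_gn hnull hint (n+1)) (integrable_gn hnull hint n)]
    refine integral_congr_ae ?_
    filter_upwards [ae_mem_Ico hnull] with x hx
    have h1x : (1:ℝ) - x ≠ 0 := by have := hx.2; intro hc; simp only [sub_eq_zero] at hc; linarith
    field_simp
    ring
  rw [deltaSeq]
  push_cast at h1
  linarith [h1, h2, hsub]

lemma GoodPairIco.integral_tn_nonneg {γ : ℕ → ℝ} {ν : Measure ℝ} {d : ℝ}
    (h : GoodPairIco γ ν d) (n : ℕ) : 0 ≤ ∫ x, x ^ n * (1 - x)⁻¹ ∂ν := by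
  refine integral_nonneg_of_ae ?_
  filter_upwards [ae_mem_Ico h.2.1] with x hx
  exact mul_nonneg (pow_nonneg hx.1 n) (inv_nonneg.2 (by linarith [hx.2]))

lemma GoodPairIco.delta_le {γ : ℕ → ℝ} {ν : Measure ℝ} {d : ℝ} (h : GoodPairIco γ ν d) (n : ℕ) :
    deltaSeq γ n ≤ d := by
  rw [h.delta_eq n]
  linarith [h.integral_tn_nonneg n]

lemma GoodPairIco.monotone {γ : ℕ → ℝ} {ν : Measure ℝ} {d : ℝ} (h : GoodPairIco γ ν d) :
    Monotone (deltaSeq γ) := by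
  refine monotone_nat_of_le_succ fun n => ?_
  rw [h.delta_eq n, h.delta_eq (n+1)]
  have : ∫ x, x ^ (n+1) * (1 - x)⁻¹ ∂ν ≤ ∫ x, x ^ n * (1 - x)⁻¹ ∂ν := by
    refine integral_mono_ae (integrable_tn h.2.1 h.2.2.1 (n+1)) (integrable_tn h.2.1 h.2.2.1 n) ?_
    filter_upwards [ae_mem_Ico h.2.1] with x hx
    exact mul_le_mul_of_nonneg_right (pow_le_pow_of_le_one hx.1 hx.2.le (Nat.le_succ n))
      (inv_nonneg.2 (by linarith [hx.2]))
  linarith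

lemma GoodPairIco.tendsto {γ : ℕ → ℝ} {ν : Measure ℝ} {d : ℝ} (h : GoodPairIco γ ν d) :
    Tendsto (deltaSeq γ) atTop (𝓝 d) := by
  have key : Tendsto (fun n => ∫ x, x ^ n * (1 - x)⁻¹ ∂ν) atTop (𝓝 0) := by
    have h0 : (0:ℝ) = ∫ x, (0:ℝ) ∂ν := by simp
    rw [h0]
    refine tendsto_integral_of_dominated_convergence (fun x => (1 - x)⁻¹)
      (fun n => (meas_tn n).aestronglyMeasurable) h.2.2.1
      (fun n => by filter_upwards [ae_mem_Ico h.2.1] with x hx using tn_bound hx n) ?_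
    filter_upwards [ae_mem_Ico h.2.1] with x hx
    have := (tendsto_pow_atTop_nhds_zero_of_lt_one hx.1 hx.2).mul_const (1 - x)⁻¹
    simpa using this
  have := tendsto_const_nhds (x := d) (f := atTop (α := ℕ)) |>.sub key
  simp only [sub_zero] at this
  refine this.congr fun n => (h.delta_eq n).symm



lemma GoodPairIco.d_nonneg {γ : ℕ → ℝ} {ν : Measure ℝ} {d : ℝ} (h : GoodPairIco γ ν d)
    (hbdd : BddBelow (Set.range γ)) : 0 ≤ d := by
  by_contra hd
  push_neg at hd
  have hstep : ∀ n : ℕ, γ n ≤ γ 0 + n * d := by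
    intro n
    induction n with
    | zero => simp
    | succ n ih =>
      have h1 : γ (n + 1) = γ n + deltaSeq γ n := by simp [deltaSeq]
      have h2 := h.delta_le n
      push_cast
      rw [h1]
      push_cast at ih
      linarith
  obtain ⟨L, hL⟩ := hbdd
  obtain ⟨n, hn⟩ := exists_nat_gt ((γ 0 - L) / (-d))
  have hLn : L ≤ γ n := hL ⟨n, rfl⟩
  have hdpos : (0:ℝ) < -d := by linarith
  rw [div_lt_iff₀ hdpos] at hn
  have := hstep n
  linarith

lemma GoodPairIco.integral_Qpoly {γ : ℕ → ℝ} {ν : Measure ℝ} {d : ℝ} (h : GoodPairIco γ ν d)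
    (n : ℕ) : ∫ x, Qpoly n x ∂ν =
      n * (∫ x, (1 - x)⁻¹ ∂ν) - ∫ x, (1 - x ^ n) / (1 - x) ^ 2 ∂ν := by
  have hnull := h.2.1
  have hint := h.2.2.1
  have hcongr : ∫ x, Qpoly n x ∂ν
      = ∫ x, ((n : ℝ) * (1 - x)⁻¹ - (1 - x ^ n) / (1 - x) ^ 2) ∂ν := by
    refine integral_congr_ae ?_
    filter_upwards [ae_mem_Ico hnull] with x hx
    exact Qpoly_eq n (ne_of_lt hx.2)
  rw [hcongr, integral_sub (hint.const_mul _) (integrable_gn hnull hint n),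
    integral_const_mul]

lemma GoodPairIco.isRepTriplet {γ : ℕ → ℝ} {ν : Measure ℝ} {d : ℝ} (h : GoodPairIco γ ν d) :
    IsRepTriplet γ (d - ∫ x in Set.Ico (0:ℝ) 1, (1 - x)⁻¹ ∂ν) 0 ν := by
  have hnull := h.2.1
  have hint := h.2.2.1
  have hI : ∫ x in Set.Ico (0:ℝ) 1, (1 - x)⁻¹ ∂ν = ∫ x, (1 - x)⁻¹ ∂ν := by
    rw [restrict_Ico_eq hnull]
  refine ⟨le_refl 0, h.1, ⟨Set.Icc 0 1, isCompact_Icc, ?_⟩, ?_, fun n => ?_⟩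
  · refine measure_mono_null ?_ hnull
    intro x hx
    simp only [Set.mem_compl_iff, Set.mem_Icc, Set.mem_Ico] at hx ⊢
    intro hc
    exact hx ⟨hc.1, hc.2.le⟩
  · refine measure_mono_null ?_ hnull
    intro x hx
    simp only [Set.mem_singleton_iff] at hx
    subst hx
    simp [Set.mem_Ico]
  · rw [hI, h.integral_Qpoly n, h.rep' n]
    ring

lemma GoodPairIco.bddAbove {γ : ℕ → ℝ} {ν : Measure ℝ} {d : ℝ} (h : GoodPairIco γ ν d) :
    BddAbove (Set.range (deltaSeq γ)) := by
  refine ⟨d, fun y hy => ?_⟩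
  obtain ⟨n, rfl⟩ := hy
  exact h.delta_le n

lemma GoodPairIco.supp_subset {γ : ℕ → ℝ} {ν : Measure ℝ} {d : ℝ} (h : GoodPairIco γ ν d) :
    measSupport ν ⊆ Set.Ici 0 := by
  intro x hx
  by_contra hx0
  simp only [Set.mem_Ici, not_le] at hx0
  refine hx (Set.Iio 0) isOpen_Iio hx0 ?_
  refine measure_mono_null ?_ h.2.1
  intro y hy
  simp only [Set.mem_Iio] at hy
  simp [Set.mem_Ico, not_le.2 hy, hy.not_ge]


lemma double_sum_factor (R : Finset ℕ) (f g : ℕ → ℂ) (c : ℂ) :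
    ∑ i ∈ R, ∑ j ∈ R, c * (f i * g j) = c * ((∑ i ∈ R, f i) * (∑ j ∈ R, g j)) := by
  rw [Finset.sum_mul_sum, Finset.mul_sum]
  exact Finset.sum_congr rfl fun i _ => by rw [Finset.mul_sum]

lemma GoodPairIco.isCPDSeq {γ : ℕ → ℝ} {ν : Measure ℝ} {d : ℝ} (h : GoodPairIco γ ν d) :
    IsCPDSeq γ := by
  have hnull := h.2.1
  have hint := h.2.2.1
  intro k l hl
  set R := Finset.range (k + 1) with hR
  set S : ℝ → ℂ := fun x => ∑ i ∈ R, (x:ℂ) ^ i * l i with hS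
  have hconj : ∑ j ∈ R, (starRingEnd ℂ) (l j) = 0 := by
    rw [← map_sum, hl, map_zero]
  set F : ℕ → ℕ → ℝ → ℂ :=
    fun i j x => (((1 - x ^ (i + j)) / (1 - x) ^ 2 : ℝ) : ℂ) * (l i * (starRingEnd ℂ) (l j))
    with hF
  have hFint : ∀ i j, Integrable (F i j) ν := fun i j =>
    ((integrable_gn hnull hint (i + j)).ofReal (𝕜 := ℂ)).mul_const _
  -- termwise decomposition
  have hterm : ∀ i j, (γ (i + j) : ℂ) * l i * (starRingEnd ℂ) (l j)
      = ((γ 0 : ℂ) * (l i * (starRingEnd ℂ) (l j))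
          + (d : ℂ) * (((i : ℂ) * l i) * (starRingEnd ℂ) (l j))
          + (d : ℂ) * (l i * ((j : ℂ) * (starRingEnd ℂ) (l j))))
        - ∫ x, F i j x ∂ν := by
    intro i j
    have hI : ∫ x, F i j x ∂ν
        = (((∫ x, (1 - x ^ (i + j)) / (1 - x) ^ 2 ∂ν : ℝ)) : ℂ)
            * (l i * (starRingEnd ℂ) (l j)) := by
      simp only [hF]
      rw [integral_mul_const]
      congr 1
      exact integral_ofReal
    rw [hI, h.rep' (i + j)]
    push_cast
    ring
  have hsplit : ∑ i ∈ R, ∑ j ∈ R, (γ (i + j) : ℂ) * l i * (starRingEnd ℂ) (l j)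
      = (∑ i ∈ R, ∑ j ∈ R, ((γ 0 : ℂ) * (l i * (starRingEnd ℂ) (l j))
          + (d : ℂ) * (((i : ℂ) * l i) * (starRingEnd ℂ) (l j))
          + (d : ℂ) * (l i * ((j : ℂ) * (starRingEnd ℂ) (l j)))))
        - ∑ i ∈ R, ∑ j ∈ R, ∫ x, F i j x ∂ν := by
    rw [← Finset.sum_sub_distrib]
    refine Finset.sum_congr rfl fun i _ => ?_
    rw [← Finset.sum_sub_distrib]
    exact Finset.sum_congr rfl fun j _ => hterm i j
  have hzero : ∑ i ∈ R, ∑ j ∈ R, ((γ 0 : ℂ) * (l i * (starRingEnd ℂ) (l j))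
          + (d : ℂ) * (((i : ℂ) * l i) * (starRingEnd ℂ) (l j))
          + (d : ℂ) * (l i * ((j : ℂ) * (starRingEnd ℂ) (l j)))) = 0 := by
    simp only [Finset.sum_add_distrib]
    rw [double_sum_factor R l (fun j => (starRingEnd ℂ) (l j)) ((γ 0 : ℂ)),
      double_sum_factor R (fun i => (i : ℂ) * l i) (fun j => (starRingEnd ℂ) (l j)) ((d:ℂ)),
      double_sum_factor R l (fun j => (j : ℂ) * (starRingEnd ℂ) (l j)) ((d:ℂ)),
      hl, hconj]
    ring
  -- pointwise identity for the integral part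
  have hpoint : ∀ x : ℝ, ∑ i ∈ R, ∑ j ∈ R, F i j x
      = -(((Complex.normSq (S x) * (((1 - x) ^ 2)⁻¹ : ℝ) : ℝ)) : ℂ) := by
    intro x
    have hconjS : (starRingEnd ℂ) (S x) = ∑ j ∈ R, (x:ℂ) ^ j * (starRingEnd ℂ) (l j) := by
      rw [hS]
      simp only [map_sum, map_mul, map_pow, Complex.conj_ofReal]
    have expand : ∀ i j : ℕ, F i j x
        = ((1 - (x:ℂ)) ^ 2)⁻¹ * (l i * (starRingEnd ℂ) (l j))
          - ((1 - (x:ℂ)) ^ 2)⁻¹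
              * (((x:ℂ) ^ i * l i) * ((x:ℂ) ^ j * (starRingEnd ℂ) (l j))) := by
      intro i j
      simp only [hF]
      push_cast
      rw [pow_add]
      ring
    have e : ∑ i ∈ R, ∑ j ∈ R, F i j x
        = ((1 - (x:ℂ)) ^ 2)⁻¹ * ((∑ i ∈ R, l i) * (∑ j ∈ R, (starRingEnd ℂ) (l j)))
          - ((1 - (x:ℂ)) ^ 2)⁻¹ * ((∑ i ∈ R, (x:ℂ) ^ i * l i)
              * (∑ j ∈ R, (x:ℂ) ^ j * (starRingEnd ℂ) (l j))) := by
      rw [← double_sum_factor R l (fun j => (starRingEnd ℂ) (l j)),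
        ← double_sum_factor R (fun i => (x:ℂ) ^ i * l i)
            (fun j => (x:ℂ) ^ j * (starRingEnd ℂ) (l j)),
        ← Finset.sum_sub_distrib]
      refine Finset.sum_congr rfl fun i _ => ?_
      rw [← Finset.sum_sub_distrib]
      exact Finset.sum_congr rfl fun j _ => expand i j
    rw [e, hl, ← hconjS]
    have hSx : ∑ i ∈ R, (x:ℂ) ^ i * l i = S x := rfl
    rw [hSx]
    have hmc : (S x) * (starRingEnd ℂ) (S x) = ((Complex.normSq (S x) : ℝ) : ℂ) :=
      Complex.mul_conj (S x)
    rw [hmc]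
    push_cast
    ring
  -- sum of integrals = integral of sum
  have hintsum : ∑ i ∈ R, ∑ j ∈ R, ∫ x, F i j x ∂ν
      = ∫ x, ∑ i ∈ R, ∑ j ∈ R, F i j x ∂ν := by
    rw [integral_finset_sum R fun i _ => integrable_finset_sum R fun j _ => hFint i j]
    exact Finset.sum_congr rfl fun i _ =>
      (integral_finset_sum R fun j _ => hFint i j).symm
  have hval : ∫ x, ∑ i ∈ R, ∑ j ∈ R, F i j x ∂ν
      = -(((∫ x, Complex.normSq (S x) * ((1 - x) ^ 2)⁻¹ ∂ν : ℝ)) : ℂ) := by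
    have base : ∫ x, ((Complex.normSq (S x) * ((1 - x) ^ 2)⁻¹ : ℝ) : ℂ) ∂ν
        = (((∫ x, Complex.normSq (S x) * ((1 - x) ^ 2)⁻¹ ∂ν : ℝ)) : ℂ) := integral_ofReal
    simp only [hpoint]
    rw [integral_neg, base]
  have hgoal : ∑ i ∈ R, ∑ j ∈ R, (γ (i + j) : ℂ) * l i * (starRingEnd ℂ) (l j)
      = (((∫ x, Complex.normSq (S x) * ((1 - x) ^ 2)⁻¹ ∂ν : ℝ)) : ℂ) := by
    rw [hsplit, hzero, hintsum, hval]
    ring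
  rw [hgoal, Complex.zero_le_real]
  refine integral_nonneg fun x => ?_
  exact mul_nonneg (Complex.normSq_nonneg _) (inv_nonneg.2 (sq_nonneg _))

-- ===== direction (i) → (ii) =====

section TripletDir
variable {γ : ℕ → ℝ} {b c : ℝ} {ν : Measure ℝ}

lemma Qpoly_continuous (n : ℕ) : Continuous (Qpoly n) := by
  unfold Qpoly
  exact continuous_finset_sum _ fun j _ => continuous_const.mul (continuous_pow j)

lemma geomsum_continuous (n : ℕ) : Continuous (fun x : ℝ => ∑ j ∈ Finset.range n, x ^ j) :=
  continuous_finset_sum _ fun j _ => continuous_pow j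

lemma IsRepTriplet.integrable_cont (ht : IsRepTriplet γ b c ν) {f : ℝ → ℝ}
    (hf : Continuous f) : Integrable f ν := by
  haveI := ht.2.1
  obtain ⟨K, hK, hKnull⟩ := ht.2.2.1
  exact integrable_of_concentrated hK hKnull hf

lemma IsRepTriplet.delta_formula (ht : IsRepTriplet γ b c ν) (n : ℕ) :
    deltaSeq γ n = b + c * (2 * n + 1) + ∫ x, (∑ j ∈ Finset.range n, x ^ j) ∂ν := by
  have h1 := ht.2.2.2.2 (n + 1)
  have h2 := ht.2.2.2.2 n
  have hQ : ∫ x, Qpoly (n+1) x ∂ν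
      = ∫ x, Qpoly n x ∂ν + ∫ x, (∑ j ∈ Finset.range n, x ^ j) ∂ν := by
    rw [← integral_add (ht.integrable_cont (Qpoly_continuous n))
      (ht.integrable_cont (geomsum_continuous n))]
    exact integral_congr_ae (Filter.Eventually.of_forall fun x => Qpoly_succ n x)
  rw [deltaSeq, h1, h2, hQ]
  push_cast
  ring

variable (hsupp : measSupport ν ⊆ Set.Ici 0) (hbd : BddAbove (Set.range (deltaSeq γ)))

lemma IsRepTriplet.Iio_null (ht : IsRepTriplet γ b c ν)
    (hsupp : measSupport ν ⊆ Set.Ici 0) : ν (Set.Iio 0) = 0 := by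
  refine measure_null_of_disjoint_measSupport isOpen_Iio fun x hx hmem => ?_
  have := hsupp hmem
  simp only [Set.mem_Iio] at hx
  simp only [Set.mem_Ici] at this
  linarith

lemma IsRepTriplet.ae_nonneg (ht : IsRepTriplet γ b c ν)
    (hsupp : measSupport ν ⊆ Set.Ici 0) : ∀ᵐ x ∂ν, 0 ≤ x := by
  rw [ae_iff]
  have : {x : ℝ | ¬ 0 ≤ x} = Set.Iio 0 := by ext x; simp
  rw [this]
  exact ht.Iio_null hsupp

lemma IsRepTriplet.integral_geom_nonneg (ht : IsRepTriplet γ b c ν)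
    (hsupp : measSupport ν ⊆ Set.Ici 0) (n : ℕ) :
    0 ≤ ∫ x, (∑ j ∈ Finset.range n, x ^ j) ∂ν := by
  refine integral_nonneg_of_ae ?_
  filter_upwards [ht.ae_nonneg hsupp] with x hx
  exact Finset.sum_nonneg fun j _ => pow_nonneg hx j

lemma IsRepTriplet.integral_geom_le (ht : IsRepTriplet γ b c ν)
    (hsupp : measSupport ν ⊆ Set.Ici 0) {M : ℝ}
    (hM : ∀ n, deltaSeq γ n ≤ M) (n : ℕ) :
    ∫ x, (∑ j ∈ Finset.range n, x ^ j) ∂ν ≤ M - b := by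
  have h := ht.delta_formula n
  have h2 := hM n
  have hc : 0 ≤ c * (2 * n + 1) := by
    have := ht.1
    positivity
  linarith

lemma IsRepTriplet.Ioi_null (ht : IsRepTriplet γ b c ν)
    (hsupp : measSupport ν ⊆ Set.Ici 0) {M : ℝ}
    (hM : ∀ n, deltaSeq γ n ≤ M) : ν (Set.Ioi 1) = 0 := by
  haveI := ht.2.1
  by_contra hne
  have hε : 0 < (ν (Set.Ioi 1)).toReal :=
    ENNReal.toReal_pos hne (measure_ne_top ν _)
  set ε := (ν (Set.Ioi 1)).toReal with hεdef
  have key : ∀ n : ℕ, (n : ℝ) * ε ≤ M - b := by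
    intro n
    have h1 : (n : ℝ) * ε ≤ ∫ x in Set.Ioi 1, (∑ j ∈ Finset.range n, x ^ j) ∂ν := by
      refine setIntegral_ge_of_const_le_real measurableSet_Ioi (measure_ne_top ν _)
        (fun x hx => ?_) ((ht.integrable_cont (geomsum_continuous n)).integrableOn)
      simp only [Set.mem_Ioi] at hx
      calc (n : ℝ) = ∑ j ∈ Finset.range n, (1:ℝ) := by simp
        _ ≤ ∑ j ∈ Finset.range n, x ^ j :=
            Finset.sum_le_sum fun j _ => one_le_pow₀ (by linarith)
    have h2 : ∫ x in Set.Ioi 1, (∑ j ∈ Finset.range n, x ^ j) ∂ν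
        ≤ ∫ x, (∑ j ∈ Finset.range n, x ^ j) ∂ν := by
      refine setIntegral_le_integral (ht.integrable_cont (geomsum_continuous n)) ?_
      filter_upwards [ht.ae_nonneg hsupp] with x hx
      exact Finset.sum_nonneg fun j _ => pow_nonneg hx j
    linarith [ht.integral_geom_le hsupp hM n]
  obtain ⟨n, hn⟩ := exists_nat_gt ((M - b) / ε)
  rw [div_lt_iff₀ hε] at hn
  linarith [key n]

lemma IsRepTriplet.c_eq_zero (ht : IsRepTriplet γ b c ν)
    (hsupp : measSupport ν ⊆ Set.Ici 0) {M : ℝ}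
    (hM : ∀ n, deltaSeq γ n ≤ M) : c = 0 := by
  refine le_antisymm ?_ ht.1
  by_contra hc
  push_neg at hc
  have key : ∀ n : ℕ, c * (2 * n + 1) ≤ M - b := by
    intro n
    have h := ht.delta_formula n
    have h2 := hM n
    linarith [ht.integral_geom_nonneg hsupp n]
  obtain ⟨n, hn⟩ := exists_nat_gt ((M - b) / c)
  rw [div_lt_iff₀ hc] at hn
  have h1 : c * (n : ℝ) ≤ c * (2 * n + 1) := by
    have : (n : ℝ) ≤ 2 * n + 1 := by linarith [Nat.cast_nonneg (α := ℝ) n]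
    exact mul_le_mul_of_nonneg_left this hc.le
  linarith [key n]

lemma IsRepTriplet.Ico_compl_null (ht : IsRepTriplet γ b c ν)
    (hsupp : measSupport ν ⊆ Set.Ici 0) {M : ℝ}
    (hM : ∀ n, deltaSeq γ n ≤ M) : ν ((Set.Ico (0:ℝ) 1)ᶜ) = 0 := by
  have h1 := ht.Iio_null hsupp
  have h2 := ht.2.2.2.1
  have h3 := ht.Ioi_null hsupp hM
  have hsub : (Set.Ico (0:ℝ) 1)ᶜ ⊆ Set.Iio 0 ∪ ({1} ∪ Set.Ioi 1) := by
    intro x hx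
    simp only [Set.mem_compl_iff, Set.mem_Ico, not_and, not_lt] at hx
    rcases lt_or_ge x 0 with h | h
    · exact Or.inl h
    · have := hx h
      rcases eq_or_lt_of_le this with h' | h'
      · exact Or.inr (Or.inl h'.symm)
      · exact Or.inr (Or.inr h')
  refine measure_mono_null hsub ?_
  rw [measure_union_null_iff]
  exact ⟨h1, by rw [measure_union_null_iff]; exact ⟨h2, h3⟩⟩

lemma IsRepTriplet.integrable_inv (ht : IsRepTriplet γ b c ν)
    (hsupp : measSupport ν ⊆ Set.Ici 0) {M : ℝ}
    (hM : ∀ n, deltaSeq γ n ≤ M) :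
    Integrable (fun x : ℝ => (1 - x)⁻¹) ν := by
  haveI := ht.2.1
  have hIco := ht.Ico_compl_null hsupp hM
  have haeIco := ae_mem_Ico hIco
  have hmeas : Measurable (fun x : ℝ => (1 - x)⁻¹) := by fun_prop
  -- the L¹ bound via monotone convergence
  have hmono : ∀ᵐ x ∂ν, Monotone fun n : ℕ => ENNReal.ofReal (∑ j ∈ Finset.range n, x ^ j) := by
    filter_upwards [haeIco] with x hx
    refine monotone_nat_of_le_succ fun n => ENNReal.ofReal_le_ofReal ?_
    rw [Finset.sum_range_succ]
    nlinarith [pow_nonneg hx.1 n]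
  have hsup : ∀ᵐ x ∂ν, (⨆ n : ℕ, ENNReal.ofReal (∑ j ∈ Finset.range n, x ^ j))
      = ENNReal.ofReal ((1 - x)⁻¹) := by
    filter_upwards [haeIco, hmono] with x hx hmx
    have htend : Tendsto (fun n : ℕ => ∑ j ∈ Finset.range n, x ^ j) atTop (𝓝 ((1 - x)⁻¹)) := by
      have h1 : ∀ n : ℕ, ∑ j ∈ Finset.range n, x ^ j = (1 - x ^ n) * (1 - x)⁻¹ := by
        intro n
        rw [geom_sum_eq' n (ne_of_lt hx.2), div_eq_mul_inv]
      simp only [h1]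
      have h2 : Tendsto (fun n : ℕ => (1 - x ^ n)) atTop (𝓝 1) := by
        have := (tendsto_pow_atTop_nhds_zero_of_lt_one hx.1 hx.2).const_sub 1
        simpa using this
      have := h2.mul_const (1 - x)⁻¹
      simpa using this
    have htend2 : Tendsto (fun n : ℕ => ENNReal.ofReal (∑ j ∈ Finset.range n, x ^ j)) atTop
        (𝓝 (ENNReal.ofReal ((1 - x)⁻¹))) :=
      (ENNReal.continuous_ofReal.tendsto _).comp htend
    exact tendsto_nhds_unique (tendsto_atTop_iSup hmx) htend2
  have hbound : ∀ n : ℕ, ∫⁻ x, ENNReal.ofReal (∑ j ∈ Finset.range n, x ^ j) ∂ν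
      ≤ ENNReal.ofReal (M - b) := by
    intro n
    rw [← ofReal_integral_eq_lintegral_ofReal (ht.integrable_cont (geomsum_continuous n)) ?nn]
    · exact ENNReal.ofReal_le_ofReal (ht.integral_geom_le hsupp hM n)
    case nn =>
      filter_upwards [ht.ae_nonneg hsupp] with x hx
      exact Finset.sum_nonneg fun j _ => pow_nonneg hx j
  have hkey : ∫⁻ x, ENNReal.ofReal ((1 - x)⁻¹) ∂ν ≤ ENNReal.ofReal (M - b) := by
    have h1 : ∫⁻ x, ENNReal.ofReal ((1 - x)⁻¹) ∂ν
        = ∫⁻ x, ⨆ n : ℕ, ENNReal.ofReal (∑ j ∈ Finset.range n, x ^ j) ∂ν :=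
      (lintegral_congr_ae hsup).symm
    rw [h1, lintegral_iSup' (fun n => ((geomsum_continuous n).measurable.ennreal_ofReal).aemeasurable) hmono]
    exact iSup_le hbound
  refine ⟨hmeas.aestronglyMeasurable, ?_⟩
  rw [hasFiniteIntegral_iff_norm]
  have hcong : ∫⁻ x, ENNReal.ofReal ‖(1 - x)⁻¹‖ ∂ν = ∫⁻ x, ENNReal.ofReal ((1 - x)⁻¹) ∂ν := by
    refine lintegral_congr_ae ?_
    filter_upwards [haeIco] with x hx
    rw [Real.norm_eq_abs, abs_of_nonneg (inv_nonneg.2 (by linarith [hx.2]))]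
  rw [hcong]
  exact lt_of_le_of_lt hkey ENNReal.ofReal_lt_top

lemma IsRepTriplet.goodPair (ht : IsRepTriplet γ b c ν)
    (hsupp : measSupport ν ⊆ Set.Ici 0) {M : ℝ}
    (hM : ∀ n, deltaSeq γ n ≤ M) :
    GoodPairIco γ ν (b + ∫ x in Set.Ico (0:ℝ) 1, (1 - x)⁻¹ ∂ν) := by
  haveI := ht.2.1
  have hIco := ht.Ico_compl_null hsupp hM
  have hint := ht.integrable_inv hsupp hM
  have hc0 := ht.c_eq_zero hsupp hM
  have hI : ∫ x in Set.Ico (0:ℝ) 1, (1 - x)⁻¹ ∂ν = ∫ x, (1 - x)⁻¹ ∂ν := by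
    rw [restrict_Ico_eq hIco]
  refine ⟨ht.2.1, hIco, hint, fun n => ?_⟩
  have hrep := ht.2.2.2.2 n
  have hQ : ∫ x, Qpoly n x ∂ν
      = n * (∫ x, (1 - x)⁻¹ ∂ν) - ∫ x, (1 - x ^ n) / (1 - x) ^ 2 ∂ν := by
    have hcongr : ∫ x, Qpoly n x ∂ν
        = ∫ x, ((n : ℝ) * (1 - x)⁻¹ - (1 - x ^ n) / (1 - x) ^ 2) ∂ν := by
      refine integral_congr_ae ?_
      filter_upwards [ae_mem_Ico hIco] with x hx
      exact Qpoly_eq n (ne_of_lt hx.2)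
    rw [hcongr, integral_sub (hint.const_mul _) (integrable_gn hIco hint n),
      integral_const_mul]
  have hset : ∫ x in Set.Ico (0:ℝ) 1, (1 - x ^ n) / (1 - x) ^ 2 ∂ν
      = ∫ x, (1 - x ^ n) / (1 - x) ^ 2 ∂ν := by
    rw [restrict_Ico_eq hIco]
  rw [hset, hI, hrep, hc0, hQ]
  ring

end TripletDir

-- ===== uniqueness via moments =====

lemma GoodPairIco.moment {γ : ℕ → ℝ} {ν : Measure ℝ} {d : ℝ} (h : GoodPairIco γ ν d) (n : ℕ) :
    ∫ x, x ^ n ∂ν = deltaSeq γ (n + 1) - deltaSeq γ n := by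
  have hnull := h.2.1
  have hint := h.2.2.1
  rw [h.delta_eq (n + 1), h.delta_eq n]
  have key : ∫ x, x ^ n * (1 - x)⁻¹ ∂ν - ∫ x, x ^ (n + 1) * (1 - x)⁻¹ ∂ν = ∫ x, x ^ n ∂ν := by
    rw [← integral_sub (integrable_tn hnull hint n) (integrable_tn hnull hint (n + 1))]
    refine integral_congr_ae ?_
    filter_upwards [ae_mem_Ico hnull] with x hx
    have h1x : (1 : ℝ) - x ≠ 0 := by
      intro hc; rw [sub_eq_zero] at hc; linarith [hx.2]
    field_simp
    ring
  linarith

lemma measure_eq_of_moments {μ μ' : Measure ℝ} (hfin : IsFiniteMeasure μ)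
    (hfin' : IsFiniteMeasure μ') (hnull : μ ((Set.Ico (0:ℝ) 1)ᶜ) = 0)
    (hnull' : μ' ((Set.Ico (0:ℝ) 1)ᶜ) = 0)
    (hmom : ∀ n : ℕ, (∫ x, x ^ n ∂μ) = ∫ x, x ^ n ∂μ') : μ = μ' := by
  haveI := hfin
  haveI := hfin'
  have hIcc : μ ((Set.Icc (0:ℝ) 1)ᶜ) = 0 :=
    measure_mono_null (Set.compl_subset_compl.mpr Set.Ico_subset_Icc_self) hnull
  have hIcc' : μ' ((Set.Icc (0:ℝ) 1)ᶜ) = 0 :=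
    measure_mono_null (Set.compl_subset_compl.mpr Set.Ico_subset_Icc_self) hnull'
  have Hint : ∀ (κ : Measure ℝ) [IsFiniteMeasure κ], κ ((Set.Icc (0:ℝ) 1)ᶜ) = 0 →
      ∀ f : ℝ → ℝ, Continuous f → Integrable f κ := by
    intro κ hκ h0 f hf
    exact integrable_of_concentrated isCompact_Icc h0 hf
  -- polynomials integrate equally
  have hpolyeval : ∀ (κ : Measure ℝ) [IsFiniteMeasure κ], κ ((Set.Icc (0:ℝ) 1)ᶜ) = 0 →
      ∀ p : Polynomial ℝ, ∫ x, p.eval x ∂κ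
        = ∑ i ∈ Finset.range (p.natDegree + 1), p.coeff i * ∫ x, x ^ i ∂κ := by
    intro κ hκ h0 p
    have he : (fun x : ℝ => p.eval x)
        = fun x => ∑ i ∈ Finset.range (p.natDegree + 1), p.coeff i * x ^ i := by
      funext x
      exact Polynomial.eval_eq_sum_range x
    rw [he, integral_finset_sum _ (fun i _ =>
      (Hint κ h0 (fun x => x ^ i) (continuous_pow i)).const_mul (p.coeff i))]
    exact Finset.sum_congr rfl fun i _ => integral_const_mul _ _
  have hpoly : ∀ p : Polynomial ℝ, ∫ x, p.eval x ∂μ = ∫ x, p.eval x ∂μ' := by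
    intro p
    rw [hpolyeval μ hIcc p, hpolyeval μ' hIcc' p]
    exact Finset.sum_congr rfl fun i _ => by rw [hmom i]
  -- continuous functions integrate equally
  have hcont : ∀ f : ℝ → ℝ, Continuous f → ∫ x, f x ∂μ = ∫ x, f x ∂μ' := by
    intro f hf
    set m := (μ Set.univ).toReal + (μ' Set.univ).toReal with hm
    have hm0 : 0 ≤ m := add_nonneg ENNReal.toReal_nonneg ENNReal.toReal_nonneg
    have hμae : ∀ᵐ x ∂μ, x ∈ Set.Icc (0:ℝ) 1 := by
      rw [ae_iff]; simpa [Set.compl_def] using hIcc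
    have hμae' : ∀ᵐ x ∂μ', x ∈ Set.Icc (0:ℝ) 1 := by
      rw [ae_iff]; simpa [Set.compl_def] using hIcc'
    have est : ∀ ε : ℝ, 0 < ε → |(∫ x, f x ∂μ) - ∫ x, f x ∂μ'| ≤ ε * m := by
      intro ε hε
      have hdense := polynomialFunctions_closure_eq_top 0 1
      set fK : C(Set.Icc (0:ℝ) 1, ℝ) := ContinuousMap.restrict (Set.Icc 0 1) ⟨f, hf⟩ with hfK
      have hmem : fK ∈ (polynomialFunctions (Set.Icc (0:ℝ) 1)).topologicalClosure := by
        rw [hdense]; trivial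
      have hmem2 : fK ∈ closure ((polynomialFunctions (Set.Icc (0:ℝ) 1)) : Set C(_, ℝ)) := hmem
      obtain ⟨g, hgmem, hgdist⟩ := Metric.mem_closure_iff.mp hmem2 ε hε
      rw [polynomialFunctions_coe] at hgmem
      obtain ⟨p, hp⟩ := hgmem
      have hpt : ∀ x, x ∈ Set.Icc (0:ℝ) 1 → |f x - p.eval x| ≤ ε := by
        intro x hx
        have h1 := ContinuousMap.dist_apply_le_dist (f := fK) (g := g) ⟨x, hx⟩
        have h2 : dist (fK ⟨x, hx⟩) (g ⟨x, hx⟩) ≤ ε := le_trans h1 hgdist.le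
        rw [← hp] at h2
        simpa [hfK, Real.dist_eq, Polynomial.toContinuousMapOnAlgHom_apply,
          Polynomial.toContinuousMapOn_apply, Polynomial.toContinuousMap_apply] using h2
      have e1 : |(∫ x, f x ∂μ) - ∫ x, p.eval x ∂μ| ≤ ε * (μ Set.univ).toReal := by
        rw [← integral_sub (Hint μ hIcc f hf) (Hint μ hIcc _ p.continuous)]
        have := norm_integral_le_of_norm_le_const (μ := μ)
          (f := fun x => f x - p.eval x) (C := ε) ?_
        · simpa [Real.norm_eq_abs, measureReal_def] using this
        · filter_upwards [hμae] with x hx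
          simpa [Real.norm_eq_abs] using hpt x hx
      have e2 : |(∫ x, p.eval x ∂μ') - ∫ x, f x ∂μ'| ≤ ε * (μ' Set.univ).toReal := by
        rw [← integral_sub (Hint μ' hIcc' _ p.continuous) (Hint μ' hIcc' f hf)]
        have := norm_integral_le_of_norm_le_const (μ := μ')
          (f := fun x => p.eval x - f x) (C := ε) ?_
        · simpa [Real.norm_eq_abs, measureReal_def] using this
        · filter_upwards [hμae'] with x hx
          have := hpt x hx
          rw [abs_sub_comm] at this
          simpa [Real.norm_eq_abs] using this
      have e3 := hpoly p
      have habs := abs_sub_le (∫ x, f x ∂μ) (∫ x, p.eval x ∂μ) (∫ x, f x ∂μ')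
      rw [hm]
      have : |(∫ x, p.eval x ∂μ) - ∫ x, f x ∂μ'| = |(∫ x, p.eval x ∂μ') - ∫ x, f x ∂μ'| := by
        rw [e3]
      rw [this] at habs
      calc |(∫ x, f x ∂μ) - ∫ x, f x ∂μ'|
          ≤ |(∫ x, f x ∂μ) - ∫ x, p.eval x ∂μ|
            + |(∫ x, p.eval x ∂μ') - ∫ x, f x ∂μ'| := habs
        _ ≤ ε * (μ Set.univ).toReal + ε * (μ' Set.univ).toReal := add_le_add e1 e2
        _ = ε * ((μ Set.univ).toReal + (μ' Set.univ).toReal) := by ring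
    -- conclude equality
    by_contra hne
    have hd : 0 < |(∫ x, f x ∂μ) - ∫ x, f x ∂μ'| := abs_pos.2 (sub_ne_zero.2 hne)
    set δ := |(∫ x, f x ∂μ) - ∫ x, f x ∂μ'| with hδ
    have h2m : (0:ℝ) < 2 * (m + 1) := by linarith
    have hq : 0 < δ / (2 * (m + 1)) := by positivity
    have hest := est (δ / (2 * (m + 1))) hq
    have hlt : δ / (2 * (m + 1)) * m < δ := by
      rw [div_mul_eq_mul_div, div_lt_iff₀ h2m]
      nlinarith
    linarith
  -- conclude measure equality via bounded continuous ℝ≥0 functions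
  refine ext_of_forall_lintegral_eq_of_IsFiniteMeasure fun f => ?_
  have hfc : Continuous fun x : ℝ => ((f x : ℝ≥0) : ℝ) := NNReal.continuous_coe.comp f.continuous
  have hlin : ∀ (κ : Measure ℝ) [IsFiniteMeasure κ], κ ((Set.Icc (0:ℝ) 1)ᶜ) = 0 →
      ∫⁻ x, (f x : ℝ≥0∞) ∂κ = ENNReal.ofReal (∫ x, ((f x : ℝ≥0) : ℝ) ∂κ) := by
    intro κ hκ h0
    rw [ofReal_integral_eq_lintegral_ofReal (Hint κ h0 _ hfc)
      (Filter.Eventually.of_forall fun x => (f x).coe_nonneg)]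
    exact lintegral_congr fun x => (ENNReal.ofReal_coe_nnreal).symm
  rw [hlin μ hIcc, hlin μ' hIcc', hcont _ hfc]

end AuxLemmas

/-- Theorem `boundiff-scalar2`: suppose `inf_n γ_n > -∞`.  Then `γ` is CPD with
`sup_n (Δγ)_n < ∞` and representing measure supported in `[0, ∞)` iff there is a pair `(ν, d)`
as in `GoodPairIco`.  Moreover: if (i) holds with representing triplet `(b, c, ν)`, then
`c = 0`, `1/(1-x) ∈ L¹(ν)` and `(d, ν)` with `d = b + ∫_{[0,1)} 1/(1-x) dν` is the unique pair
satisfying (ii); if (ii) holds, then `d ≥ 0`, `Δγ` is monotonically increasing to `d`, and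
`(b, 0, ν)` with `b = d - ∫_{[0,1)} 1/(1-x) dν` represents `γ`. -/
theorem cpd_with_bounded_differences (γ : ℕ → ℝ) (hbdd : BddBelow (Set.range γ)) :
    ((IsCPDSeq γ ∧ BddAbove (Set.range (deltaSeq γ)) ∧
        ∃ (b c : ℝ) (ν : Measure ℝ), IsRepTriplet γ b c ν ∧ measSupport ν ⊆ Set.Ici 0) ↔
      ∃ (ν : Measure ℝ) (d : ℝ), GoodPairIco γ ν d) ∧
    (∀ (b c : ℝ) (ν : Measure ℝ), IsCPDSeq γ → BddAbove (Set.range (deltaSeq γ)) →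
      IsRepTriplet γ b c ν → measSupport ν ⊆ Set.Ici 0 →
      c = 0 ∧ Integrable (fun x : ℝ => (1 - x)⁻¹) ν ∧
      GoodPairIco γ ν (b + ∫ x in Set.Ico (0 : ℝ) 1, (1 - x)⁻¹ ∂ν) ∧
      (∀ (ν' : Measure ℝ) (d' : ℝ), GoodPairIco γ ν' d' →
        ν' = ν ∧ d' = b + ∫ x in Set.Ico (0 : ℝ) 1, (1 - x)⁻¹ ∂ν)) ∧
    (∀ (ν : Measure ℝ) (d : ℝ), GoodPairIco γ ν d →
      0 ≤ d ∧ Monotone (deltaSeq γ) ∧ Tendsto (deltaSeq γ) atTop (𝓝 d) ∧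
      IsRepTriplet γ (d - ∫ x in Set.Ico (0 : ℝ) 1, (1 - x)⁻¹ ∂ν) 0 ν) := by
  constructor
  · constructor
    · rintro ⟨hcpd, hbd, b, c, ν, ht, hsupp⟩
      obtain ⟨M, hMmem⟩ := hbd
      have hM : ∀ n, deltaSeq γ n ≤ M := fun n => hMmem ⟨n, rfl⟩
      exact ⟨ν, b + ∫ x in Set.Ico (0:ℝ) 1, (1 - x)⁻¹ ∂ν, ht.goodPair hsupp hM⟩
    · rintro ⟨ν, d, h⟩
      exact ⟨h.isCPDSeq, h.bddAbove,
        ⟨d - ∫ x in Set.Ico (0:ℝ) 1, (1 - x)⁻¹ ∂ν, 0, ν, h.isRepTriplet, h.supp_subset⟩⟩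
  constructor
  · intro b c ν hcpd hbd ht hsupp
    obtain ⟨M, hMmem⟩ := hbd
    have hM : ∀ n, deltaSeq γ n ≤ M := fun n => hMmem ⟨n, rfl⟩
    have hgood := ht.goodPair hsupp hM
    refine ⟨ht.c_eq_zero hsupp hM, ht.integrable_inv hsupp hM, hgood, ?_⟩
    intro ν' d' h'
    have hmomeq : ∀ n : ℕ, (∫ x, x ^ n ∂ν') = ∫ x, x ^ n ∂ν := by
      intro n
      rw [h'.moment n, hgood.moment n]
    have hνeq : ν' = ν := measure_eq_of_moments h'.1 ht.2.1 h'.2.1 hgood.2.1 hmomeq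
    refine ⟨hνeq, ?_⟩
    subst hνeq
    have h1 := h'.2.2.2 1
    have h2 := hgood.2.2.2 1
    push_cast at h1 h2
    linarith
  · intro ν d h
    exact ⟨h.d_nonneg hbdd, h.monotone, h.tendsto, h.isRepTriplet⟩

end
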